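/- Let D = (V, E, w) be a vertex-weighted oriented graph and let z be a leaf of D with unique in-neighbor y. Then for any t ≥ 1: (I(D)^t, z^{w_z}) = (I(D∖z)^t, z^{w_z}), where D∖z is the induced subgraph on V∖{z}. -/

import Mathlib

open MvPolynomial

noncomputable section

namespace PaperReg

variable (k : Type) [Field k] (σ : Type)

/-- A graded free resolution of a homogeneous ideal `I` of `MvPolynomial σ k`:
finite-rank free modules `Fin (rk i) →₀ S` with basis elements of degrees `deg i`,
degree-preserving differentials, exact, augmented onto `I`. -/
structure GradedFreeRes (I : Ideal (MvPolynomial σ k)) where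
  rk : ℕ → ℕ
  deg : (i : ℕ) → Fin (rk i) → ℕ
  aug : (Fin (rk 0) →₀ MvPolynomial σ k) →ₗ[MvPolynomial σ k] MvPolynomial σ k
  d : (i : ℕ) →
    ((Fin (rk (i + 1)) →₀ MvPolynomial σ k) →ₗ[MvPolynomial σ k] (Fin (rk i) →₀ MvPolynomial σ k))
  aug_range : LinearMap.range aug = I
  exact_zero : LinearMap.range (d 0) = LinearMap.ker aug
  exact_succ : ∀ i, LinearMap.range (d (i + 1)) = LinearMap.ker (d i)
  aug_graded : ∀ b, (aug (Finsupp.single b 1)).IsHomogeneous (deg 0 b)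
  d_graded : ∀ i b c, (d i (Finsupp.single b 1)) c = 0 ∨
    ∃ m, deg (i + 1) b = deg i c + m ∧ ((d i (Finsupp.single b 1)) c).IsHomogeneous m

/-- The `(i,j)`-th graded Betti number of `I`: the minimal number of degree-`j` basis
elements in homological position `i`, over all graded free resolutions of `I`
(achieved by the minimal graded free resolution). -/
def betti (I : Ideal (MvPolynomial σ k)) (i j : ℕ) : ℕ :=
  sInf { r | ∃ F : GradedFreeRes k σ I,
    r = (Finset.univ.filter (fun b => F.deg i b = j)).card }

/-- Castelnuovo–Mumford regularity: `reg I = max { j - i | betti I i j ≠ 0 }`. -/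
def reg (I : Ideal (MvPolynomial σ k)) : ℕ :=
  sSup { r | ∃ i j : ℕ, betti k σ I i j ≠ 0 ∧ r = j - i }

/-- The monic monomial with exponent vector `a`. -/
def mon (a : σ →₀ ℕ) : MvPolynomial σ k := monomial a 1

/-- `I` is a monomial ideal. -/
def IsMonomialIdeal (I : Ideal (MvPolynomial σ k)) : Prop :=
  ∃ A : Set (σ →₀ ℕ), I = Ideal.span (mon k σ '' A)

/-- The exponent vectors of the unique minimal set of monomial generators of a
monomial ideal: monomials of `I` minimal with respect to divisibility. -/
def minGens (I : Ideal (MvPolynomial σ k)) : Set (σ →₀ ℕ) :=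
  { a | mon k σ a ∈ I ∧ ∀ b : σ →₀ ℕ, mon k σ b ∈ I → b ≤ a → b = a }

/-- The support of a monomial ideal: variables appearing in its minimal generators. -/
def isupp (I : Ideal (MvPolynomial σ k)) : Set σ :=
  ⋃ a ∈ minGens k σ I, ↑a.support

variable (V : Type) [Fintype V] [DecidableEq V]

/-- The edge-ideal generator attached to a directed edge `e` of a vertex-weighted
oriented graph: `x_{e.1} * x_{e.2} ^ (w e.2)`. -/
def edgeMon (w : V → ℕ) (e : V × V) : MvPolynomial V k :=
  monomial (Finsupp.single e.1 1 + Finsupp.single e.2 (w e.2)) 1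

/-- The edge ideal of a vertex-weighted oriented graph with edge set `E`. -/
def edgeIdeal (E : Finset (V × V)) (w : V → ℕ) : Ideal (MvPolynomial V k) :=
  Ideal.span (edgeMon k V w '' ↑E)

/-- The underlying undirected simple graph of the directed edge set `E`. -/
def underlying (E : Finset (V × V)) : SimpleGraph V where
  Adj a b := a ≠ b ∧ ((a, b) ∈ E ∨ (b, a) ∈ E)
  symm := ⟨fun a b h => ⟨h.1.symm, h.2.symm⟩⟩
  loopless := ⟨fun a h => h.1 rfl⟩

/-- The degree of a vertex in the underlying graph. -/
def degOf (E : Finset (V × V)) (v : V) : ℕ :=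
  (E.filter (fun e => e.1 = v ∨ e.2 = v)).card
lemma sup_pow_le_aux {R : Type*} [CommRing R] (I J : Ideal R) :
    ∀ t : ℕ, 1 ≤ t → (I ⊔ J) ^ t ≤ I ^ t ⊔ J := by
  intro t
  induction t with
  | zero => intro h; omega
  | succ n ih =>
    intro _
    rcases Nat.eq_zero_or_pos n with hn | hn
    · subst hn; simp
    · have h1 : (I ⊔ J) ^ (n + 1) = (I ⊔ J) ^ n * (I ⊔ J) := by ring
      rw [h1]
      calc (I ⊔ J) ^ n * (I ⊔ J) ≤ (I ^ n ⊔ J) * (I ⊔ J) :=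
            Ideal.mul_mono_left (ih hn)
        _ ≤ I ^ (n + 1) ⊔ J := by
            rw [Ideal.sup_mul, Ideal.mul_sup, Ideal.mul_sup]
            apply sup_le (sup_le _ _) (sup_le _ _)
            · rw [pow_succ]; exact le_sup_left
            · exact le_sup_of_le_right Ideal.mul_le_right
            · exact le_sup_of_le_right Ideal.mul_le_left
            · exact le_sup_of_le_right Ideal.mul_le_right

/-- if `z` is a leaf of the vertex-weighted oriented graph `D` with
unique in-neighbour `y`, then for all `t ≥ 1`,
`(I(D)^t, z^{w_z}) = (I(D∖z)^t, z^{w_z})`, where `D∖z` is the induced subgraph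
obtained by deleting `z`. -/
theorem power_add_leaf_pow
    (E : Finset (V × V)) (w : V → ℕ) (hw : ∀ v, 1 ≤ w v)
    (hloop : ∀ e ∈ E, e.1 ≠ e.2)
    (y z : V) (hyz : (y, z) ∈ E)
    (hleaf : ∀ e ∈ E, e.1 = z ∨ e.2 = z → e = (y, z))
    (t : ℕ) (ht : 1 ≤ t) :
    (edgeIdeal k V E w) ^ t ⊔ Ideal.span {mon k V (Finsupp.single z (w z))} =
      (edgeIdeal k V (E.filter (fun e => e.1 ≠ z ∧ e.2 ≠ z)) w) ^ t ⊔
        Ideal.span {mon k V (Finsupp.single z (w z))} := by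
  set M : Ideal (MvPolynomial V k) := Ideal.span {mon k V (Finsupp.single z (w z))} with hM
  set E' := E.filter (fun e => e.1 ≠ z ∧ e.2 ≠ z) with hE'
  have hyz' : y ≠ z := by
    have := hloop _ hyz; simpa using this
  have hJ'le : edgeIdeal k V E' w ≤ edgeIdeal k V E w := by
    apply Ideal.span_mono
    exact Set.image_mono (by exact_mod_cast Finset.filter_subset _ E)
  have hgM : edgeMon k V w (y, z) ∈ M := by
    rw [hM, Ideal.mem_span_singleton]
    refine ⟨mon k V (Finsupp.single y 1), ?_⟩
    rw [mon, mon, edgeMon, monomial_mul]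
    simp [add_comm]
  have hJle : edgeIdeal k V E w ≤ edgeIdeal k V E' w ⊔ M := by
    rw [edgeIdeal, Ideal.span_le]
    rintro f ⟨e, he, rfl⟩
    rw [Finset.mem_coe] at he
    by_cases hz : e.1 = z ∨ e.2 = z
    · have := hleaf e he hz
      subst this
      exact Ideal.mem_sup_right hgM
    · push_neg at hz
      apply Ideal.mem_sup_left
      apply Ideal.subset_span
      exact ⟨e, by simp [hE', he, hz.1, hz.2], rfl⟩
  apply le_antisymm
  · apply sup_le _ le_sup_right
    calc edgeIdeal k V E w ^ t ≤ (edgeIdeal k V E' w ⊔ M) ^ t :=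
          Ideal.pow_right_mono hJle t
      _ ≤ edgeIdeal k V E' w ^ t ⊔ M := sup_pow_le_aux _ _ t ht
  · exact sup_le_sup_right (Ideal.pow_right_mono hJ'le t) M

end PaperReg
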